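/- Combining the two previous facts: if G̃ is obtained from G by deleting a set D of edges, and f̄*(G) denotes the optimal (unweighted) reuse ratio of G, then applying validity check to an optimal multi-coloring of G̃ yields a valid multi-coloring 𝒞' of G with f̄(𝒞') ≥ f̄*(G) − |D|/|V|. -/

import Mathlib

/-- A multi-coloring `𝒞 : V → Finset C` is valid if adjacent vertices share no color. -/
def ValidMC {V C : Type*} (G : SimpleGraph V) (𝒞 : V → Finset C) : Prop :=
  ∀ v₁ v₂, G.Adj v₁ v₂ → ∀ c, ¬ (c ∈ 𝒞 v₁ ∧ c ∈ 𝒞 v₂)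

/-- The unweighted reuse ratio of a multi-coloring. -/
noncomputable def reuseRatio {V C : Type*} [Fintype V] [Fintype C]
    (𝒞 : V → Finset C) : ℝ :=
  (1 / ((Fintype.card C : ℝ) * (Fintype.card V : ℝ))) * ∑ v, ((𝒞 v).card : ℝ)

theorem stmt_9 {V C : Type*} [Fintype V] [Fintype C] [DecidableEq V] [DecidableEq C]
    (G G' : SimpleGraph V) [DecidableRel G.Adj] [DecidableRel G'.Adj]
    (hle : G' ≤ G)  -- G̃ obtained from G by deleting the edge set D
    (fstarG : ℝ)
    (hfstarG : IsGreatest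
      {x : ℝ | ∃ 𝒞 : V → Finset C, ValidMC G 𝒞 ∧ x = reuseRatio 𝒞} fstarG)
    -- an optimal multi-coloring of G̃
    (𝒞 : V → Finset C) (h𝒞 : ValidMC G' 𝒞)
    (hopt : IsGreatest
      {x : ℝ | ∃ 𝒟 : V → Finset C, ValidMC G' 𝒟 ∧ x = reuseRatio 𝒟} (reuseRatio 𝒞)) :
    ∃ 𝒞' : V → Finset C,
      (∀ v, 𝒞' v ⊆ 𝒞 v) ∧
      ValidMC G 𝒞' ∧
      reuseRatio 𝒞' ≥ fstarG -
        ((G.edgeFinset \ G'.edgeFinset).card : ℝ) / (Fintype.card V : ℝ) := by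
  classical
  set D := G.edgeFinset \ G'.edgeFinset with hD
  set e := Fintype.equivFin V with he
  set below : V → Finset V := fun v =>
    Finset.univ.filter (fun w => e w < e v ∧ G.Adj v w ∧ ¬ G'.Adj v w) with hbelow
  set removed : V → Finset C := fun v => (below v).biUnion (fun w => 𝒞 w) with hrem
  refine ⟨fun v => 𝒞 v \ removed v, fun v => Finset.sdiff_subset, ?_, ?_⟩
  · intro v w hadj c ⟨hcv, hcw⟩
    by_cases h' : G'.Adj v w
    · exact h𝒞 v w h' c ⟨Finset.sdiff_subset hcv, Finset.sdiff_subset hcw⟩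
    · have hne : e v ≠ e w := fun h => hadj.ne (e.injective h)
      rcases lt_or_gt_of_ne hne with hlt | hlt
      · have : c ∈ removed w := Finset.mem_biUnion.2
          ⟨v, Finset.mem_filter.2 ⟨Finset.mem_univ v, hlt, hadj.symm, fun h => h' h.symm⟩,
            Finset.sdiff_subset hcv⟩
        exact (Finset.mem_sdiff.1 hcw).2 this
      · have : c ∈ removed v := Finset.mem_biUnion.2
          ⟨w, Finset.mem_filter.2 ⟨Finset.mem_univ w, hlt, hadj, h'⟩,
            Finset.sdiff_subset hcw⟩
        exact (Finset.mem_sdiff.1 hcv).2 this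
  · -- first: fstarG ≤ reuseRatio 𝒞
    obtain ⟨𝒟, h𝒟, hx⟩ := hfstarG.1
    have h𝒟' : ValidMC G' 𝒟 := fun v w h => h𝒟 v w (hle h)
    have hfle : fstarG ≤ reuseRatio 𝒞 := by
      rw [hx]; exact hopt.2 ⟨𝒟, h𝒟', rfl⟩
    -- counting
    have hcount : ∑ v, (below v).card ≤ D.card := by
      rw [← Finset.card_sigma]
      apply Finset.card_le_card_of_injOn (fun p => s(p.1, p.2))
      · intro p hp
        have hp2 := (Finset.mem_sigma.1 hp).2
        rw [hbelow] at hp2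
        obtain ⟨-, hlt, hadj, hnadj⟩ := Finset.mem_filter.1 hp2
        rw [hD, Finset.mem_coe, Finset.mem_sdiff]
        refine ⟨SimpleGraph.mem_edgeFinset.2 hadj, fun h => hnadj (SimpleGraph.mem_edgeFinset.1 h)⟩
      · intro p hp q hq heq
        have hp2 := (Finset.mem_sigma.1 hp).2
        have hq2 := (Finset.mem_sigma.1 hq).2
        rw [hbelow] at hp2 hq2
        obtain ⟨-, hltp, -, -⟩ := Finset.mem_filter.1 hp2
        obtain ⟨-, hltq, -, -⟩ := Finset.mem_filter.1 hq2
        simp only [Sym2.eq, Sym2.rel_iff', Prod.mk.injEq, Prod.swap_prod_mk] at heq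
        rcases heq with ⟨h1, h2⟩ | ⟨h1, h2⟩
        · exact Sigma.ext h1 (heq_of_eq h2)
        · rw [h1, h2] at hltp
          exact absurd (hltp.trans hltq) (lt_irrefl _)
    have hver : ∀ v, (𝒞 v).card ≤ ((𝒞 v \ removed v).card) + (below v).card * Fintype.card C := by
      intro v
      have h1 : (𝒞 v).card ≤ (𝒞 v \ removed v).card + (removed v).card := by
        calc (𝒞 v).card ≤ ((𝒞 v \ removed v) ∪ removed v).card :=
              Finset.card_le_card (fun c hc => by
                by_cases h : c ∈ removed v
                · exact Finset.mem_union.2 (Or.inr h)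
                · exact Finset.mem_union.2 (Or.inl (Finset.mem_sdiff.2 ⟨hc, h⟩)))
          _ ≤ _ := Finset.card_union_le _ _
      have h2 : (removed v).card ≤ (below v).card * Fintype.card C := by
        calc (removed v).card ≤ ∑ w ∈ below v, (𝒞 w).card := Finset.card_biUnion_le
          _ ≤ ∑ _w ∈ below v, Fintype.card C :=
              Finset.sum_le_sum (fun w _ => Finset.card_le_univ _)
          _ = (below v).card * Fintype.card C := by rw [Finset.sum_const, smul_eq_mul]
      omega
    have hsum : ∑ v, (𝒞 v).card ≤ (∑ v, (𝒞 v \ removed v).card) + D.card * Fintype.card C := by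
      calc ∑ v, (𝒞 v).card
          ≤ ∑ v, ((𝒞 v \ removed v).card + (below v).card * Fintype.card C) :=
            Finset.sum_le_sum (fun v _ => hver v)
        _ = (∑ v, (𝒞 v \ removed v).card) + (∑ v, (below v).card) * Fintype.card C := by
            rw [Finset.sum_add_distrib, Finset.sum_mul]
        _ ≤ _ := by
            have := Nat.mul_le_mul_right (Fintype.card C) hcount
            omega
    have key : reuseRatio 𝒞 ≤ reuseRatio (fun v => 𝒞 v \ removed v)
        + (D.card : ℝ) / (Fintype.card V : ℝ) := by
      by_cases hK : Fintype.card C = 0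
      · have h0 : ∀ v, (𝒞 v).card = 0 := fun v =>
          Nat.le_zero.1 (hK ▸ Finset.card_le_univ (𝒞 v))
        simp only [reuseRatio, hK, Nat.cast_zero, zero_mul, one_div, inv_zero]
        positivity
      by_cases hn : Fintype.card V = 0
      · have : IsEmpty V := Fintype.card_eq_zero_iff.1 hn
        simp [reuseRatio, hn]
      have hK' : (0:ℝ) < Fintype.card C := Nat.cast_pos.2 (Nat.pos_of_ne_zero hK)
      have hn' : (0:ℝ) < Fintype.card V := Nat.cast_pos.2 (Nat.pos_of_ne_zero hn)
      have hS : (∑ v, ((𝒞 v).card:ℝ)) ≤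
          (∑ v, ((𝒞 v \ removed v).card : ℝ)) + (D.card : ℝ) * Fintype.card C := by
        exact_mod_cast hsum
      unfold reuseRatio
      calc (1 / ((Fintype.card C : ℝ) * Fintype.card V)) * ∑ v, ((𝒞 v).card:ℝ)
          ≤ (1 / ((Fintype.card C : ℝ) * Fintype.card V)) *
            ((∑ v, ((𝒞 v \ removed v).card : ℝ)) + (D.card : ℝ) * Fintype.card C) := by
            apply mul_le_mul_of_nonneg_left hS
            positivity
        _ = _ := by
            rw [mul_add]; congr 1
            field_simp
    linarith [hfle, key]
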